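/- arXiv:1803.01408 — 2 statements merged into one kernel-verified Lean document; each statement's English description precedes it below -/
import Mathlib

section
/- Let Λ be a complete Noetherian local ring and A a complete Noetherian local Λ-algebra with the same residue field, and let m ∈ ℕ. If the completed tensor product A ⊗̂_Λ Λ[[x]] is isomorphic as a Λ-algebra to Λ[[x_1,…,x_m]], then A is isomorphic as a Λ-algebra to Λ[[x_1,…,x_{m−1}]]. -/
open IsLocalRing

namespace Stmt4Aux

open MvPowerSeries

variable {Λ : Type} [CommRing Λ] {m : ℕ}

/-- total degree of an exponent -/
def degf (d : Fin m →₀ ℕ) : ℕ := d.sum fun _ e => e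

lemma degf_add (d e : Fin m →₀ ℕ) : degf (d + e) = degf d + degf e :=
  Finsupp.sum_add_index' (fun _ => rfl) (fun _ _ _ => rfl)

lemma degf_zero : degf (0 : Fin m →₀ ℕ) = 0 := Finsupp.sum_zero_index

lemma apply_le_degf (d : Fin m →₀ ℕ) (i : Fin m) : d i ≤ degf d := by
  by_cases h : d i = 0
  · simp [h]
  · exact Finset.single_le_sum (fun _ _ => Nat.zero_le _) (Finsupp.mem_support_iff.2 h)

lemma degf_eq_zero_iff (d : Fin m →₀ ℕ) : degf d = 0 ↔ d = 0 := by
  constructor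
  · intro h
    ext i
    have := apply_le_degf d i
    simp only [Finsupp.coe_zero, Pi.zero_apply]
    omega
  · rintro rfl; exact degf_zero

lemma degf_single (i : Fin m) : degf (Finsupp.single i 1) = 1 := by
  simp [degf, Finsupp.sum_single_index]

lemma eq_single_of_degf_eq_one {d : Fin m →₀ ℕ} (h : degf d = 1) : ∃ i, d = Finsupp.single i 1 := by
  have hd0 : d ≠ 0 := by
    rintro rfl; rw [degf_zero] at h; omega
  obtain ⟨i, hi⟩ := Finsupp.support_nonempty_iff.2 hd0
  have hdi : d i ≠ 0 := Finsupp.mem_support_iff.1 hi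
  refine ⟨i, ?_⟩
  have hall : ∀ j, j ≠ i → d j = 0 := by
    intro j hj
    by_contra hjd
    have hjs : j ∈ d.support := Finsupp.mem_support_iff.2 hjd
    have hsub : ({i, j} : Finset (Fin m)) ⊆ d.support := by
      intro x hx
      rcases Finset.mem_insert.1 hx with rfl | hx
      · exact hi
      · rwa [Finset.mem_singleton.1 hx]
    have h2 : d i + d j ≤ degf d := by
      have := Finset.sum_le_sum_of_subset hsub (f := fun j => d j)
      rwa [Finset.sum_pair (Ne.symm hj)] at this
    omega
  have hdi1 : d i = 1 := by
    have := apply_le_degf d i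
    have : d i ≤ 1 := h ▸ this
    omega
  ext j
  rcases eq_or_ne j i with rfl | hj
  · simp [hdi1]
  · simp [Finsupp.single_apply, Ne.symm hj, hall j hj]

lemma exists_decomp (g : MvPowerSeries (Fin m) Λ) (hg : constantCoeff g = 0) :
    ∃ h : Fin m → MvPowerSeries (Fin m) Λ, g = ∑ i, X i * h i ∧
      ∀ i d, coeff d (h i) = 0 ∨ coeff d (h i) = coeff (d + Finsupp.single i 1) g := by
  classical
  set h : Fin m → MvPowerSeries (Fin m) Λ := fun i =>
    (fun d => if ∀ j, j < i → d j = 0 then coeff (d + Finsupp.single i 1) g else 0 :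
      (Fin m →₀ ℕ) → Λ) with hh
  have hcoeff : ∀ i d, coeff d (h i) =
      if ∀ j, j < i → d j = 0 then coeff (d + Finsupp.single i 1) g else 0 := by
    intro i d; rw [coeff_apply]
  refine ⟨h, ?_, ?_⟩
  · ext d
    rw [map_sum]
    have hX : ∀ i, (X i : MvPowerSeries (Fin m) Λ) * h i =
        monomial (Finsupp.single i 1) 1 * h i := by intro i; rfl
    by_cases hd : d = 0
    · subst hd
      rw [← coeff_zero_eq_constantCoeff_apply] at hg
      rw [hg]
      symm
      refine (Finset.sum_eq_zero ?_)
      intro i _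
      rw [hX, coeff_monomial_mul, if_neg]
      intro hle
      have := hle i
      simp [Finsupp.single_apply] at this
    · have hsupp : d.support.Nonempty := Finsupp.support_nonempty_iff.2 hd
      set i₀ := d.support.min' hsupp with hi₀
      have hi₀mem : i₀ ∈ d.support := d.support.min'_mem hsupp
      have hdi₀ : d i₀ ≠ 0 := Finsupp.mem_support_iff.1 hi₀mem
      have hmin : ∀ j, j < i₀ → d j = 0 := by
        intro j hj
        by_contra hdj
        exact absurd (d.support.min'_le j (Finsupp.mem_support_iff.2 hdj)) (by omega)
      rw [Finset.sum_eq_single_of_mem i₀ (Finset.mem_univ _)]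
      · rw [hX, coeff_monomial_mul, if_pos (Finsupp.single_le_iff.2 (by omega)), hcoeff, if_pos,
          one_mul, tsub_add_cancel_of_le (Finsupp.single_le_iff.2 (by omega))]
        intro j hj
        rw [Finsupp.tsub_apply, Finsupp.single_apply, if_neg (by omega)]
        simp [hmin j hj]
      · intro i _ hi
        rw [hX, coeff_monomial_mul]
        by_cases hle : Finsupp.single i 1 ≤ d
        · rw [if_pos hle, hcoeff, if_neg, mul_zero]
          intro hforall
          have hdi : 1 ≤ d i := Finsupp.single_le_iff.1 hle
          have hii : i₀ ≤ i := d.support.min'_le i (Finsupp.mem_support_iff.2 (by omega))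
          have hi₀i : i₀ < i := lt_of_le_of_ne hii (by
            intro hcontra
            exact hi (hcontra.symm ▸ rfl))
          have := hforall i₀ hi₀i
          rw [Finsupp.tsub_apply, Finsupp.single_apply, if_neg (by omega)] at this
          omega
        · rw [if_neg hle]
  · intro i d
    rw [hcoeff]
    split
    · right; rfl
    · left; rfl

lemma mem_pow_span_X (k : ℕ) (g : MvPowerSeries (Fin m) Λ)
    (hc : ∀ d, degf d < k → coeff d g = 0) :
    g ∈ (Ideal.span (Set.range (X : Fin m → MvPowerSeries (Fin m) Λ))) ^ k := by
  induction k generalizing g with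
  | zero => rw [pow_zero, Ideal.one_eq_top]; exact Submodule.mem_top
  | succ k ih =>
    have hg0 : constantCoeff g = 0 := by
      rw [← coeff_zero_eq_constantCoeff_apply]
      exact hc 0 (by rw [degf_zero]; omega)
    obtain ⟨h, hsum, hcoeff⟩ := exists_decomp g hg0
    rw [hsum, pow_succ']
    refine Ideal.sum_mem _ (fun i _ => Ideal.mul_mem_mul (Ideal.subset_span ⟨i, rfl⟩) (ih _ ?_))
    intro d hd
    rcases hcoeff i d with h0 | h0
    · exact h0
    · rw [h0]
      exact hc _ (by rw [degf_add, degf_single]; omega)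


section Complete

variable [IsLocalRing Λ]

private lemma exp_le {i j a b dd : ℕ} (h : a + b = dd) :
    (i + j) - dd ≤ (i - a) + (j - b) := by omega

/-- ideal of series whose coefficients lie in deep powers of the maximal ideal -/
def Dk (m : ℕ) (k : ℕ) : Ideal (MvPowerSeries (Fin m) Λ) where
  carrier := {g | ∀ d, coeff d g ∈ (maximalIdeal Λ) ^ (k - degf d)}
  add_mem' := by
    intro a b ha hb d
    rw [map_add]
    exact add_mem (ha d) (hb d)
  zero_mem' := by intro d; rw [map_zero]; exact zero_mem _
  smul_mem' := by
    classical
    intro c g hg d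
    rw [smul_eq_mul, coeff_mul]
    refine sum_mem (fun p hp => ?_)
    rw [Finset.HasAntidiagonal.mem_antidiagonal] at hp
    refine Ideal.mul_mem_left _ _ (Ideal.pow_le_pow_right ?_ (hg p.2))
    have : degf p.1 + degf p.2 = degf d := by rw [← degf_add, hp]
    omega

lemma mem_Dk_iff {k : ℕ} {g : MvPowerSeries (Fin m) Λ} :
    g ∈ Dk m k ↔ ∀ d, coeff d g ∈ (maximalIdeal Λ) ^ (k - degf d) := Iff.rfl

lemma Dk_mul_le (i j : ℕ) : (Dk m i : Ideal (MvPowerSeries (Fin m) Λ)) * Dk m j ≤ Dk m (i + j) := by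
  classical
  rw [Ideal.mul_le]
  intro g hg h hh
  intro d
  rw [coeff_mul]
  refine sum_mem (fun p hp => ?_)
  rw [Finset.HasAntidiagonal.mem_antidiagonal] at hp
  have hmem := Ideal.mul_mem_mul (hg p.1) (hh p.2)
  rw [← pow_add] at hmem
  refine Ideal.pow_le_pow_right ?_ hmem
  have : degf p.1 + degf p.2 = degf d := by rw [← degf_add, hp]
  omega

lemma maximalIdeal_le_Dk_one :
    maximalIdeal (MvPowerSeries (Fin m) Λ) ≤ Dk m 1 := by
  intro g hg d
  by_cases hd : degf d = 0
  · have hd0 : d = 0 := (degf_eq_zero_iff d).1 hd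
    subst hd0
    rw [hd, coeff_zero_eq_constantCoeff_apply]
    rw [pow_one]
    rw [mem_maximalIdeal] at hg ⊢  -- hg : g nonunit
    intro hunit
    exact hg (isUnit_iff_constantCoeff.2 hunit)
  · rw [Nat.sub_eq_zero_of_le (by omega), pow_zero, Ideal.one_eq_top]
    exact Submodule.mem_top

lemma pow_maximalIdeal_le_Dk (k : ℕ) :
    (maximalIdeal (MvPowerSeries (Fin m) Λ)) ^ k ≤ Dk m k := by
  induction k with
  | zero =>
    intro g _ d
    rw [Nat.zero_sub, pow_zero, Ideal.one_eq_top]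
    exact Submodule.mem_top
  | succ k ih =>
    rw [pow_succ]
    calc maximalIdeal (MvPowerSeries (Fin m) Λ) ^ k * maximalIdeal (MvPowerSeries (Fin m) Λ)
        ≤ Dk m k * Dk m 1 := Ideal.mul_mono ih maximalIdeal_le_Dk_one
      _ ≤ Dk m (k + 1) := Dk_mul_le k 1

lemma C_mem_pow {c : Λ} {j : ℕ} (hc : c ∈ (maximalIdeal Λ) ^ j) :
    (C) c ∈ (maximalIdeal (MvPowerSeries (Fin m) Λ)) ^ j := by
  have hmap : Ideal.map (algebraMap Λ (MvPowerSeries (Fin m) Λ)) (maximalIdeal Λ)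
      ≤ maximalIdeal (MvPowerSeries (Fin m) Λ) := by
    rw [Ideal.map_le_iff_le_comap]
    intro x hx
    rw [Ideal.mem_comap, mem_maximalIdeal, mem_nonunits_iff]
    intro hunit
    rw [isUnit_iff_constantCoeff] at hunit
    rw [← c_eq_algebraMap, constantCoeff_C] at hunit
    exact (mem_maximalIdeal x).1 hx hunit
  have : (C) c ∈ Ideal.map (algebraMap Λ (MvPowerSeries (Fin m) Λ)) ((maximalIdeal Λ) ^ j) := by
    rw [c_eq_algebraMap]
    exact Ideal.mem_map_of_mem _ hc
  rw [Ideal.map_pow] at this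
  exact Ideal.pow_right_mono hmap j this

lemma span_X_le_maximalIdeal :
    Ideal.span (Set.range (X : Fin m → MvPowerSeries (Fin m) Λ))
      ≤ maximalIdeal (MvPowerSeries (Fin m) Λ) := by
  rw [Ideal.span_le]
  rintro _ ⟨i, rfl⟩
  rw [SetLike.mem_coe, mem_maximalIdeal, mem_nonunits_iff]
  intro hunit
  rw [isUnit_iff_constantCoeff, constantCoeff_X] at hunit
  exact not_isUnit_zero hunit

lemma monomial_one_mem (d : Fin m →₀ ℕ) :
    (monomial d 1 : MvPowerSeries (Fin m) Λ)
      ∈ (maximalIdeal (MvPowerSeries (Fin m) Λ)) ^ (degf d) := by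
  classical
  refine SetLike.le_def.1 (Ideal.pow_right_mono span_X_le_maximalIdeal _) ?_
  refine mem_pow_span_X _ _ (fun e he => ?_)
  rw [coeff_monomial, if_neg]
  rintro rfl
  omega

lemma Dk_le_pow (k : ℕ) :
    (Dk m k : Ideal (MvPowerSeries (Fin m) Λ)) ≤ (maximalIdeal (MvPowerSeries (Fin m) Λ)) ^ k := by
  classical
  intro g hg
  haveI hfin : Finite {d : Fin m →₀ ℕ | degf d < k} := by
    refine Finite.of_injective (fun d => (fun i => (⟨d.1 i, by
      have h1 := apply_le_degf d.1 i
      have h2 : degf (d : Fin m →₀ ℕ) < k := d.2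
      omega⟩ : Fin k)) : _ → (Fin m → Fin k)) ?_
    intro d₁ d₂ hd
    ext i
    have := congrFun hd i
    simpa [Fin.mk.injEq] using this
  have hsetfin : {d : Fin m →₀ ℕ | degf d < k}.Finite := Set.toFinite _
  set F := hsetfin.toFinset with hF
  have hmemF : ∀ d, d ∈ F ↔ degf d < k := fun d => by
    rw [hF, Set.Finite.mem_toFinset]; rfl
  set P : MvPowerSeries (Fin m) Λ := ∑ d ∈ F, monomial d (coeff d g) with hP
  have hPmem : P ∈ (maximalIdeal (MvPowerSeries (Fin m) Λ)) ^ k := by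
    refine Ideal.sum_mem _ (fun d hd => ?_)
    have hdk : degf d < k := (hmemF d).1 hd
    have hsplit : (monomial d (coeff d g) : MvPowerSeries (Fin m) Λ)
        = C (coeff d g) * monomial d 1 := by
      have := monomial_mul_monomial (0 : Fin m →₀ ℕ) d (coeff d g) 1
      rw [zero_add, mul_one] at this
      rw [← this]; rfl
    rw [hsplit]
    have h1 := C_mem_pow (m := m) (hg d)
    have h2 := monomial_one_mem (Λ := Λ) d
    have := Ideal.mul_mem_mul h1 h2
    rw [← pow_add] at this
    have heq : k - degf d + degf d = k := by omega
    rwa [heq] at this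
  have hrem : g - P ∈ (maximalIdeal (MvPowerSeries (Fin m) Λ)) ^ k := by
    refine SetLike.le_def.1 (Ideal.pow_right_mono span_X_le_maximalIdeal _) ?_
    refine mem_pow_span_X _ _ (fun e he => ?_)
    rw [map_sub, hP, map_sum]
    have : ∀ d ∈ F, coeff e (monomial d (coeff d g)) =
        if e = d then coeff d g else 0 := fun d _ => coeff_monomial e d _
    rw [Finset.sum_congr rfl this, Finset.sum_ite_eq F e (fun d => coeff d g),
      if_pos ((hmemF e).2 he), sub_self]
  have := add_mem hrem hPmem
  rwa [sub_add_cancel] at this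

lemma smod_iff {R : Type} [CommRing R] (I : Ideal R) (k : ℕ) (x y : R) :
    x ≡ y [SMOD (I ^ k • ⊤ : Ideal R)] ↔ x - y ∈ I ^ k := by
  rw [SModEq.sub_mem, smul_eq_mul, Ideal.mul_top]

variable [IsAdicComplete (maximalIdeal Λ) Λ]

lemma mvps_isHausdorff :
    IsHausdorff (maximalIdeal (MvPowerSeries (Fin m) Λ)) (MvPowerSeries (Fin m) Λ) := by
  constructor
  intro x hx
  ext d
  rw [map_zero]
  refine IsHausdorff.haus (inferInstance : IsHausdorff (maximalIdeal Λ) Λ) _ (fun n => ?_)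
  rw [smod_iff, sub_zero]
  have hxmem := (smod_iff _ _ _ _).1 (hx (n + degf d))
  rw [sub_zero] at hxmem
  have := pow_maximalIdeal_le_Dk (Λ := Λ) (m := m) (n + degf d) hxmem d
  rwa [Nat.add_sub_cancel] at this

lemma mvps_isPrecomplete :
    IsPrecomplete (maximalIdeal (MvPowerSeries (Fin m) Λ)) (MvPowerSeries (Fin m) Λ) := by
  constructor
  intro f hf
  have hf' : ∀ {a b : ℕ}, a ≤ b → f b - f a ∈ (maximalIdeal (MvPowerSeries (Fin m) Λ)) ^ a := by
    intro a b hab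
    have := (smod_iff _ _ _ _).1 (hf hab)
    simpa using (neg_mem this : _)
  have key : ∀ d : Fin m →₀ ℕ, ∃ L : Λ, ∀ n,
      coeff d (f (n + degf d)) ≡ L [SMOD ((maximalIdeal Λ) ^ n • ⊤ : Ideal Λ)] := by
    intro d
    refine IsPrecomplete.prec (inferInstance : IsPrecomplete (maximalIdeal Λ) Λ) ?_
    intro a b hab
    rw [smod_iff]
    have hmem := hf' (Nat.add_le_add_right hab (degf d))
    have := pow_maximalIdeal_le_Dk (Λ := Λ) (m := m) (a + degf d) hmem d
    rw [Nat.add_sub_cancel, map_sub] at this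
    simpa using (neg_mem this : _)
  choose L hL using key
  refine ⟨(fun d => L d : (Fin m →₀ ℕ) → Λ), fun n => ?_⟩
  refine (smod_iff (R := MvPowerSeries (Fin m) Λ) _ _ _ _).2 ?_
  refine Dk_le_pow n (fun d => ?_)
  rw [map_sub (coeff d) (f n) ((fun d => L d : (Fin m →₀ ℕ) → Λ) : MvPowerSeries (Fin m) Λ)]
  have hLd : coeff d ((fun d => L d : (Fin m →₀ ℕ) → Λ) : MvPowerSeries (Fin m) Λ) = L d := by
    rfl
  rw [hLd]
  by_cases hnd : degf d ≤ n
  · set n' := n - degf d with hn'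
    have h1 := (smod_iff _ _ _ _).1 (hL d n')
    have h2 : coeff d (f (n' + degf d)) - coeff d (f n)
        ∈ (maximalIdeal Λ) ^ (n - degf d) := by
      have : n' + degf d = n := by omega
      rw [this, sub_self]
      exact zero_mem _
    have := add_mem (neg_mem h1) h2
    have heq : -(coeff d (f (n' + degf d)) - L d) +
        (coeff d (f (n' + degf d)) - coeff d (f n))
        = L d - coeff d (f n) := by ring
    rw [heq] at this
    simpa using (neg_mem this : _)
  · rw [Nat.sub_eq_zero_of_le (by omega), pow_zero, Ideal.one_eq_top]
    exact Submodule.mem_top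

instance mvps_isAdicComplete :
    IsAdicComplete (maximalIdeal (MvPowerSeries (Fin m) Λ)) (MvPowerSeries (Fin m) Λ) :=
  { mvps_isHausdorff, mvps_isPrecomplete with }

end Complete


section Split

variable {σ τ : Type}

/-- reindexing underlying function -/
noncomputable def toSplitFun (e : (σ →₀ ℕ) ≃+ ((Unit →₀ ℕ) × (τ →₀ ℕ))) (g : MvPowerSeries σ Λ) :
    MvPowerSeries Unit (MvPowerSeries τ Λ) :=
  (fun u => (fun t => g (e.symm (u, t)) : (τ →₀ ℕ) → Λ) : (Unit →₀ ℕ) → MvPowerSeries τ Λ)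

lemma coeff_toSplitFun (e : (σ →₀ ℕ) ≃+ ((Unit →₀ ℕ) × (τ →₀ ℕ))) (g : MvPowerSeries σ Λ)
    (u : Unit →₀ ℕ) (t : τ →₀ ℕ) :
    coeff t (coeff u (toSplitFun e g)) = coeff (e.symm (u, t)) g := by
  rw [coeff_apply, coeff_apply, coeff_apply]; rfl

noncomputable def ofSplitFun (e : (σ →₀ ℕ) ≃+ ((Unit →₀ ℕ) × (τ →₀ ℕ)))
    (G : MvPowerSeries Unit (MvPowerSeries τ Λ)) : MvPowerSeries σ Λ :=
  (fun d => G (e d).1 (e d).2 : (σ →₀ ℕ) → Λ)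

lemma coeff_ofSplitFun (e : (σ →₀ ℕ) ≃+ ((Unit →₀ ℕ) × (τ →₀ ℕ)))
    (G : MvPowerSeries Unit (MvPowerSeries τ Λ)) (d : σ →₀ ℕ) :
    coeff d (ofSplitFun e G) = coeff (e d).2 (coeff (e d).1 G) := by
  rw [coeff_apply, coeff_apply, coeff_apply]; rfl

lemma toSplitFun_mul (e : (σ →₀ ℕ) ≃+ ((Unit →₀ ℕ) × (τ →₀ ℕ))) (g h : MvPowerSeries σ Λ) :
    toSplitFun e (g * h) = toSplitFun e g * toSplitFun e h := by
  classical
  refine MvPowerSeries.ext fun u => MvPowerSeries.ext fun t => ?_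
  rw [coeff_toSplitFun, coeff_mul (R := Λ), coeff_mul, map_sum]
  have step : ∀ q ∈ Finset.HasAntidiagonal.antidiagonal u,
      coeff t (coeff q.1 (toSplitFun e g) *
        coeff q.2 (toSplitFun e h)) =
      ∑ r ∈ Finset.HasAntidiagonal.antidiagonal t,
        coeff (e.symm (q.1, r.1)) g * coeff (e.symm (q.2, r.2)) h := by
    intro q _
    rw [coeff_mul]
    refine Finset.sum_congr rfl (fun r _ => ?_)
    rw [coeff_toSplitFun, coeff_toSplitFun]
  rw [Finset.sum_congr rfl step]
  refine Eq.trans ?_ (Finset.sum_product' (Finset.HasAntidiagonal.antidiagonal u) (Finset.HasAntidiagonal.antidiagonal t)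
    (fun (q : (Unit →₀ ℕ) × (Unit →₀ ℕ)) (r : (τ →₀ ℕ) × (τ →₀ ℕ)) =>
      coeff (e.symm (q.1, r.1)) g * coeff (e.symm (q.2, r.2)) h))
  refine Finset.sum_nbij'
    (fun p => (((e p.1).1, (e p.2).1), ((e p.1).2, (e p.2).2)))
    (fun z => (e.symm (z.1.1, z.2.1), e.symm (z.1.2, z.2.2))) ?_ ?_ ?_ ?_ ?_
  · intro p hp
    rw [Finset.HasAntidiagonal.mem_antidiagonal] at hp
    have : e p.1 + e p.2 = (u, t) := by
      rw [← map_add, hp, AddEquiv.apply_symm_apply]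
    rw [Finset.mem_product, Finset.HasAntidiagonal.mem_antidiagonal, Finset.HasAntidiagonal.mem_antidiagonal]
    constructor
    · have := congrArg Prod.fst this; simpa using this
    · have := congrArg Prod.snd this; simpa using this
  · intro z hz
    rw [Finset.mem_product, Finset.HasAntidiagonal.mem_antidiagonal, Finset.HasAntidiagonal.mem_antidiagonal] at hz
    rw [Finset.HasAntidiagonal.mem_antidiagonal, ← map_add]
    have : (z.1.1 + z.1.2, z.2.1 + z.2.2) = (u, t) := by
      rw [Prod.mk.injEq]; exact hz
    rw [show ((z.1.1, z.2.1) + (z.1.2, z.2.2) : (Unit →₀ ℕ) × (τ →₀ ℕ))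
      = (z.1.1 + z.1.2, z.2.1 + z.2.2) from rfl, this]
  · intro p _
    simp
  · intro z _
    simp
  · intro p _
    rw [AddEquiv.symm_apply_apply, AddEquiv.symm_apply_apply]

lemma toSplitFun_C (e : (σ →₀ ℕ) ≃+ ((Unit →₀ ℕ) × (τ →₀ ℕ))) (a : Λ) :
    toSplitFun e (C a) = C (C a) := by
  classical
  refine MvPowerSeries.ext fun u => MvPowerSeries.ext fun t => ?_
  rw [coeff_toSplitFun, coeff_C, coeff_C]
  by_cases hu : u = 0
  · subst hu
    rw [if_pos rfl, coeff_C]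
    by_cases ht : t = 0
    · subst ht
      rw [if_pos rfl, if_pos]
      rw [show ((0 : Unit →₀ ℕ), (0 : τ →₀ ℕ)) = 0 from rfl, map_zero]
    · rw [if_neg ht, if_neg]
      intro hcontra
      have h2 : ((0 : Unit →₀ ℕ), t) = (0 : (Unit →₀ ℕ) × (τ →₀ ℕ)) := by
        rw [← AddEquiv.apply_symm_apply e ((0 : Unit →₀ ℕ), t), hcontra, map_zero]
      exact ht (by simpa using congrArg Prod.snd h2)
  · rw [if_neg (by
      intro hcontra
      have h2 : (u, t) = (0 : (Unit →₀ ℕ) × (τ →₀ ℕ)) := by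
        rw [← AddEquiv.apply_symm_apply e (u, t), hcontra, map_zero]
      exact hu (by simpa using congrArg Prod.fst h2)), if_neg hu, map_zero]

/-- the splitting ring equivalence -/
noncomputable def splitRingEquiv (e : (σ →₀ ℕ) ≃+ ((Unit →₀ ℕ) × (τ →₀ ℕ))) :
    MvPowerSeries σ Λ ≃+* MvPowerSeries Unit (MvPowerSeries τ Λ) where
  toFun := toSplitFun e
  invFun := ofSplitFun e
  left_inv g := by
    ext d
    rw [coeff_ofSplitFun, coeff_toSplitFun]
    congr 1
    simp
  right_inv G := by
    refine MvPowerSeries.ext fun u => MvPowerSeries.ext fun t => ?_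
    rw [coeff_toSplitFun, coeff_ofSplitFun, AddEquiv.apply_symm_apply]
  map_mul' := toSplitFun_mul e
  map_add' g h := by
    refine MvPowerSeries.ext fun u => MvPowerSeries.ext fun t => ?_
    rw [map_add, coeff_toSplitFun, map_add, map_add, coeff_toSplitFun, coeff_toSplitFun]

lemma splitRingEquiv_one (e : (σ →₀ ℕ) ≃+ ((Unit →₀ ℕ) × (τ →₀ ℕ))) :
    toSplitFun (Λ := Λ) e 1 = 1 := by
  have h1 : (1 : MvPowerSeries σ Λ) = C 1 := by rw [map_one]
  rw [h1, toSplitFun_C, map_one, map_one]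

/-- the splitting algebra equivalence -/
noncomputable def splitAlgEquiv (e : (σ →₀ ℕ) ≃+ ((Unit →₀ ℕ) × (τ →₀ ℕ))) :
    MvPowerSeries σ Λ ≃ₐ[Λ] MvPowerSeries Unit (MvPowerSeries τ Λ) :=
  AlgEquiv.ofRingEquiv (f := splitRingEquiv e) (fun a => by
    have h1 : algebraMap Λ (MvPowerSeries σ Λ) a = C a := by
      rw [MvPowerSeries.algebraMap_apply]
      simp
    have h2 : algebraMap Λ (MvPowerSeries Unit (MvPowerSeries τ Λ)) a
        = C (C a) := by
      rw [MvPowerSeries.algebraMap_apply, MvPowerSeries.algebraMap_apply]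
      simp
    rw [h1, h2]
    exact toSplitFun_C e a)

end Split


section Weierstrass

set_option linter.unusedSectionVars false

variable {R : Type} [CommRing R] [IsLocalRing R]

/-- drop the constant term and shift down -/
noncomputable def shift (h : PowerSeries R) : PowerSeries R :=
  PowerSeries.mk fun n => PowerSeries.coeff (n + 1) h

lemma coeff_shift (h : PowerSeries R) (n : ℕ) :
    PowerSeries.coeff n (shift h) = PowerSeries.coeff (n + 1) h :=
  PowerSeries.coeff_mk _ _

lemma shift_decomp (h : PowerSeries R) :
    h = PowerSeries.C (PowerSeries.coeff 0 h) + PowerSeries.X * shift h := by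
  ext n
  cases n with
  | zero =>
    rw [map_add, PowerSeries.coeff_zero_X_mul, PowerSeries.coeff_zero_C, add_zero]
  | succ n =>
    rw [map_add, PowerSeries.coeff_C, if_neg (by omega), PowerSeries.coeff_succ_X_mul,
      coeff_shift, zero_add]

/-- all coefficients lie in an ideal -/
def CoeffsIn (J : Ideal R) (h : PowerSeries R) : Prop := ∀ n, PowerSeries.coeff n h ∈ J

lemma CoeffsIn.mul_left {J : Ideal R} {w : PowerSeries R} (hw : CoeffsIn J w)
    (v : PowerSeries R) : CoeffsIn J (v * w) := by
  intro n
  rw [PowerSeries.coeff_mul]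
  exact sum_mem (fun p _ => Ideal.mul_mem_left _ _ (hw p.2))

lemma CoeffsIn.shift {J : Ideal R} {w : PowerSeries R} (hw : CoeffsIn J w) :
    CoeffsIn J (shift w) := fun n => by rw [coeff_shift]; exact hw _

lemma cauchy_of_succ {I : Ideal R} {f : ℕ → R} (hf : ∀ k, f (k + 1) - f k ∈ I ^ (k : ℕ)) :
    ∀ {a b : ℕ}, a ≤ b → f a ≡ f b [SMOD (I ^ a • ⊤ : Ideal R)] := by
  intro a b hab
  rw [smod_iff]
  induction b with
  | zero =>
    have : a = 0 := by omega
    subst this; rw [sub_self]; exact zero_mem _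
  | succ b ih =>
    rcases Nat.lt_or_ge a (b + 1) with hlt | hge
    · have hab' : a ≤ b := by omega
      have h1 := ih hab'
      have h2 : f (b + 1) - f b ∈ I ^ a :=
        Ideal.pow_le_pow_right hab' (hf b)
      have := add_mem h1 (neg_mem h2)
      have heq : f a - f b + -(f (b + 1) - f b) = f a - f (b + 1) := by ring
      rwa [heq] at this
    · have : a = b + 1 := by omega
      subst this; rw [sub_self]; exact zero_mem _

variable [IsAdicComplete (maximalIdeal R) R]

set_option synthInstance.maxHeartbeats 1000000 in
theorem weierstrass_bijective (F : PowerSeries R)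
    (h0 : PowerSeries.coeff 0 F ∈ maximalIdeal R)
    (h1 : IsUnit (PowerSeries.coeff 1 F)) :
    Function.Bijective ((Ideal.Quotient.mk (Ideal.span {F})).comp (PowerSeries.C)) := by
  set a₀ := PowerSeries.coeff 0 F with ha₀
  set t := shift F with ht
  have htu : IsUnit t := by
    rw [PowerSeries.isUnit_iff_constantCoeff]
    have : PowerSeries.constantCoeff t = PowerSeries.coeff 1 F := by
      rw [← PowerSeries.coeff_zero_eq_constantCoeff_apply, coeff_shift]
    rwa [this]
  obtain ⟨u, hu⟩ := htu
  have hFdecomp : F = PowerSeries.C a₀ + PowerSeries.X * t := shift_decomp F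
  have htu1 : t * ↑u⁻¹ = 1 := by rw [← hu]; exact u.mul_inv
  -- the key division identity
  have key : ∀ h : PowerSeries R,
      h - PowerSeries.C (PowerSeries.coeff 0 h)
        - (-(PowerSeries.C a₀ * (↑u⁻¹ * shift h)))
      = F * (↑u⁻¹ * shift h) := by
    intro h
    have e2 := shift_decomp h
    rw [hFdecomp]
    linear_combination e2 - (PowerSeries.X * shift h) * htu1
  constructor
  · -- injectivity
    have main : ∀ r : R, (Ideal.Quotient.mk (Ideal.span {F})) (PowerSeries.C r) = 0 → r = 0 := by
      intro r hr
      rw [Ideal.Quotient.eq_zero_iff_mem, Ideal.mem_span_singleton] at hr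
      obtain ⟨q, hq⟩ := hr
      have hcoe : ∀ k, CoeffsIn ((maximalIdeal R) ^ k) q := by
        intro k
        induction k with
        | zero => intro n; rw [pow_zero, Ideal.one_eq_top]; exact Submodule.mem_top
        | succ k ih =>
          have htq : CoeffsIn ((maximalIdeal R) ^ (k + 1)) (t * q) := by
            intro n
            have hcoeff : PowerSeries.coeff (n + 1) (PowerSeries.C r) = 0 := by
              rw [PowerSeries.coeff_C, if_neg (by omega)]
            have hexp : PowerSeries.coeff (n + 1) (F * q)
                = a₀ * PowerSeries.coeff (n + 1) q + PowerSeries.coeff n (t * q) := by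
              rw [hFdecomp, add_mul, map_add, PowerSeries.coeff_C_mul]
              congr 1
              rw [mul_assoc, PowerSeries.coeff_succ_X_mul]
            have hzero : a₀ * PowerSeries.coeff (n + 1) q + PowerSeries.coeff n (t * q) = 0 := by
              rw [← hexp, ← hq, hcoeff]
            have hmem : a₀ * PowerSeries.coeff (n + 1) q ∈ (maximalIdeal R) ^ (k + 1) := by
              have := Ideal.mul_mem_mul h0 (ih (n + 1))
              rwa [← pow_succ'] at this
            have heq : PowerSeries.coeff n (t * q)
                = -(a₀ * PowerSeries.coeff (n + 1) q) := by linear_combination hzero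
            rw [heq]
            exact neg_mem hmem
          have hq' : q = ↑u⁻¹ * (t * q) := by
            rw [← mul_assoc, mul_comm (↑u⁻¹ : PowerSeries R) t, htu1, one_mul]
          rw [hq']
          exact htq.mul_left _
      have hrk : ∀ k, r ∈ (maximalIdeal R) ^ k := by
        intro k
        have hr0 : r = a₀ * PowerSeries.coeff 0 q := by
          have hstep : PowerSeries.coeff 0 (F * q)
              = a₀ * PowerSeries.coeff 0 q := by
            rw [hFdecomp, add_mul, map_add, PowerSeries.coeff_C_mul, mul_assoc,
              PowerSeries.coeff_zero_X_mul, add_zero]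
          rw [← hstep, ← hq, PowerSeries.coeff_zero_C]
        rw [hr0]
        exact Ideal.mul_mem_left _ _ (hcoe k 0)
      refine IsHausdorff.haus (inferInstance : IsHausdorff (maximalIdeal R) R) r (fun n => ?_)
      rw [smod_iff, sub_zero]
      exact hrk n
    intro r₁ r₂ h12
    have : (Ideal.Quotient.mk (Ideal.span {F})) (PowerSeries.C (r₁ - r₂)) = 0 := by
      rw [map_sub, map_sub]
      rw [RingHom.comp_apply, RingHom.comp_apply] at h12
      rw [h12, sub_self]
    have := main _ this
    linear_combination this
  · -- surjectivity
    intro gbar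
    obtain ⟨g, rfl⟩ := Ideal.Quotient.mk_surjective gbar
    set N : PowerSeries R → PowerSeries R :=
      fun h => -(PowerSeries.C a₀ * (↑u⁻¹ * shift h)) with hN
    set seq : ℕ → PowerSeries R := fun k => N^[k] g with hseq
    have hseq_succ : ∀ k, seq (k + 1) = N (seq k) := by
      intro k
      rw [hseq]
      exact Function.iterate_succ_apply' N k g
    have hNval : ∀ h, N h = -(PowerSeries.C a₀ * (↑u⁻¹ * shift h)) := fun h => rfl
    have hseqmem : ∀ k, CoeffsIn ((maximalIdeal R) ^ k) (seq k) := by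
      intro k
      induction k with
      | zero => intro n; rw [pow_zero, Ideal.one_eq_top]; exact Submodule.mem_top
      | succ k ih =>
        rw [hseq_succ, hNval]
        intro n
        have hin : CoeffsIn ((maximalIdeal R) ^ k) (↑u⁻¹ * shift (seq k)) :=
          (ih.shift).mul_left _
        rw [map_neg]
        refine neg_mem ?_
        rw [PowerSeries.coeff_C_mul]
        have := Ideal.mul_mem_mul h0 (hin n)
        rwa [← pow_succ'] at this
    set s : ℕ → R := fun k => ∑ j ∈ Finset.range k, PowerSeries.coeff 0 (seq j) with hs
    set w : ℕ → PowerSeries R :=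
      fun k => ∑ j ∈ Finset.range k, ↑u⁻¹ * shift (seq j) with hw
    have hs1 : ∀ k, s (k + 1) = s k + PowerSeries.coeff 0 (seq k) := fun k =>
      Finset.sum_range_succ _ _
    have hw1 : ∀ k, w (k + 1) = w k + ↑u⁻¹ * shift (seq k) := fun k =>
      Finset.sum_range_succ _ _
    have hs0 : s 0 = 0 := Finset.sum_range_zero _
    have hw0 : w 0 = 0 := Finset.sum_range_zero _
    have hseq0 : seq 0 = g := rfl
    have hident : ∀ k, g - PowerSeries.C (s k) - seq k = F * w k := by
      intro k
      induction k with
      | zero =>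
        rw [hs0, hw0, hseq0, map_zero, mul_zero, sub_zero, sub_self]
      | succ k ih =>
        have hkey := key (seq k)
        rw [hs1, hw1, hseq_succ, hNval, map_add, mul_add]
        linear_combination ih + hkey
    obtain ⟨r, hr⟩ := IsPrecomplete.prec (inferInstance : IsPrecomplete (maximalIdeal R) R)
      (f := s) (by
        intro a b hab
        refine cauchy_of_succ (f := s) (fun k => ?_) hab
        rw [hs1 k, add_sub_cancel_left]
        exact hseqmem k 0)
    have hrs : ∀ k, r - s k ∈ (maximalIdeal R) ^ k := by
      intro k
      have := (smod_iff _ _ _ _).1 (hr k)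
      simpa using (neg_mem this : _)
    have hwc : ∀ n : ℕ, ∃ L : R, ∀ k, PowerSeries.coeff n (w k) ≡ L
        [SMOD ((maximalIdeal R) ^ k • ⊤ : Ideal R)] := by
      intro n
      refine IsPrecomplete.prec (inferInstance : IsPrecomplete (maximalIdeal R) R) ?_
      intro a b hab
      refine cauchy_of_succ (f := fun k => PowerSeries.coeff n (w k)) (fun k => ?_) hab
      show PowerSeries.coeff n (w (k + 1)) - PowerSeries.coeff n (w k) ∈ (maximalIdeal R) ^ k
      rw [hw1 k, map_add, add_sub_cancel_left]
      exact ((hseqmem k).shift.mul_left _) n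
    choose W hW using hwc
    set wlim : PowerSeries R := PowerSeries.mk W with hwlim
    have hWk : ∀ n k, W n - PowerSeries.coeff n (w k) ∈ (maximalIdeal R) ^ k := by
      intro n k
      have := (smod_iff _ _ _ _).1 (hW n k)
      simpa using (neg_mem this : _)
    have hfinal : g - PowerSeries.C r = F * wlim := by
      have hcoeffzero : ∀ n, PowerSeries.coeff n (g - PowerSeries.C r - F * wlim) = 0 := by
        intro n
        refine IsHausdorff.haus (inferInstance : IsHausdorff (maximalIdeal R) R) _ (fun k => ?_)
        rw [smod_iff, sub_zero]
        have hsplit : g - PowerSeries.C r - F * wlim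
            = (g - PowerSeries.C (s k) - seq k - F * w k)
              + PowerSeries.C (s k - r) + seq k + F * (w k - wlim) := by
          rw [map_sub]
          ring
        rw [hsplit, hident k, sub_self, zero_add, map_add, map_add]
        refine add_mem (add_mem ?_ ?_) ?_
        · rw [PowerSeries.coeff_C]
          split
          · have := neg_mem (hrs k)
            rwa [neg_sub] at this
          · exact zero_mem _
        · exact hseqmem k n
        · rw [PowerSeries.coeff_mul]
          refine sum_mem (fun p _ => Ideal.mul_mem_left _ _ ?_)
          rw [map_sub]
          have hmem := hWk p.2 k
          have heq : PowerSeries.coeff p.2 (w k) - PowerSeries.coeff p.2 wlim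
              = -(W p.2 - PowerSeries.coeff p.2 (w k)) := by
            rw [hwlim, PowerSeries.coeff_mk]; ring
          rw [heq]
          exact neg_mem hmem
      ext n
      have h2 : PowerSeries.coeff n (g - PowerSeries.C r)
          - PowerSeries.coeff n (F * wlim) = 0 := by
        rw [← map_sub]
        exact hcoeffzero n
      linear_combination h2
    refine ⟨r, ?_⟩
    rw [RingHom.comp_apply, Ideal.Quotient.mk_eq_mk_iff_sub_mem, Ideal.mem_span_singleton]
    exact ⟨-wlim, by rw [mul_neg, ← hfinal]; ring⟩

end Weierstrass


section Extract

variable [IsLocalRing Λ] {A : Type} [CommRing A] [IsLocalRing A]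
  [Algebra Λ A] [IsLocalHom (algebraMap Λ A)]

/-- the ideal of power series whose first two coefficients are in the maximal ideal -/
def Kideal (A : Type) [CommRing A] [IsLocalRing A] : Ideal (PowerSeries A) where
  carrier := {g | PowerSeries.coeff 0 g ∈ maximalIdeal A ∧
    PowerSeries.coeff 1 g ∈ maximalIdeal A}
  add_mem' := by
    intro a b ha hb
    exact ⟨by rw [map_add]; exact add_mem ha.1 hb.1, by rw [map_add]; exact add_mem ha.2 hb.2⟩
  zero_mem' := by
    constructor <;> (rw [map_zero]; exact zero_mem _)
  smul_mem' := by
    intro c g hg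
    constructor
    · rw [smul_eq_mul, PowerSeries.coeff_mul]
      refine sum_mem (fun p hp => ?_)
      rw [Finset.HasAntidiagonal.mem_antidiagonal] at hp
      have : p.2 = 0 := by omega
      rw [this]
      exact Ideal.mul_mem_left _ _ hg.1
    · rw [smul_eq_mul, PowerSeries.coeff_mul]
      refine sum_mem (fun p hp => ?_)
      rw [Finset.HasAntidiagonal.mem_antidiagonal] at hp
      have : p.2 = 0 ∨ p.2 = 1 := by omega
      rcases this with h | h <;> rw [h]
      · exact Ideal.mul_mem_left _ _ hg.1
      · exact Ideal.mul_mem_left _ _ hg.2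

lemma mem_Kideal_iff {g : PowerSeries A} :
    g ∈ Kideal A ↔ PowerSeries.coeff 0 g ∈ maximalIdeal A ∧
      PowerSeries.coeff 1 g ∈ maximalIdeal A := Iff.rfl

lemma maximalIdeal_sq_le_Kideal :
    (maximalIdeal (PowerSeries A)) ^ 2 ≤ Kideal A := by
  rw [pow_two, Ideal.mul_le]
  intro a ha b hb
  have hA : ∀ x : PowerSeries A, x ∈ maximalIdeal (PowerSeries A) →
      PowerSeries.coeff 0 x ∈ maximalIdeal A := by
    intro x hx
    rw [mem_maximalIdeal, mem_nonunits_iff] at hx ⊢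
    intro hunit
    refine hx (PowerSeries.isUnit_iff_constantCoeff.2 ?_)
    rwa [← PowerSeries.coeff_zero_eq_constantCoeff_apply]
  rw [mem_Kideal_iff]
  constructor
  · rw [PowerSeries.coeff_mul]
    refine sum_mem (fun p hp => ?_)
    rw [Finset.HasAntidiagonal.mem_antidiagonal] at hp
    have : p.1 = 0 := by omega
    rw [this]
    exact Ideal.mul_mem_right _ _ (hA a ha)
  · rw [PowerSeries.coeff_mul]
    refine sum_mem (fun p hp => ?_)
    rw [Finset.HasAntidiagonal.mem_antidiagonal] at hp
    have : p.1 = 0 ∨ p.2 = 0 := by omega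
    rcases this with h | h
    · rw [h]; exact Ideal.mul_mem_right _ _ (hA a ha)
    · rw [h]; exact Ideal.mul_mem_left _ _ (hA b hb)

lemma algebraMap_mem_Kideal {x : Λ} (hx : x ∈ maximalIdeal Λ) :
    PowerSeries.C (algebraMap Λ A x) ∈ Kideal A := by
  rw [mem_Kideal_iff]
  constructor
  · rw [PowerSeries.coeff_zero_C, mem_maximalIdeal, mem_nonunits_iff]
    intro hunit
    have := IsLocalHom.map_nonunit (f := algebraMap Λ A) x hunit
    exact (mem_maximalIdeal x).1 hx this
  · rw [PowerSeries.coeff_C, if_neg (by omega)]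
    exact zero_mem _

lemma exists_unit_linear {m : ℕ} (ψ : PowerSeries A ≃ₐ[Λ] MvPowerSeries (Fin m) Λ) :
    constantCoeff (ψ PowerSeries.X) ∈ maximalIdeal Λ ∧
      ∃ i : Fin m, IsUnit (coeff (Finsupp.single i 1) (ψ PowerSeries.X)) := by
  classical
  set f := ψ PowerSeries.X with hf
  have hXnonunit : ¬ IsUnit (PowerSeries.X : PowerSeries A) := by
    intro hX
    have := PowerSeries.isUnit_iff_constantCoeff.1 hX
    rw [PowerSeries.constantCoeff_X] at this
    exact not_isUnit_zero this
  have hfnonunit : ¬ IsUnit f := by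
    intro hXf
    refine hXnonunit ?_
    have := hXf.map (ψ.symm : MvPowerSeries (Fin m) Λ →+* PowerSeries A)
    rwa [show (ψ.symm : MvPowerSeries (Fin m) Λ →+* PowerSeries A) f = PowerSeries.X by
      rw [hf]; exact ψ.symm_apply_apply _] at this
  have hc0 : constantCoeff f ∈ maximalIdeal Λ := by
    rw [mem_maximalIdeal, mem_nonunits_iff]
    intro hunit
    exact hfnonunit (isUnit_iff_constantCoeff.2 hunit)
  refine ⟨hc0, ?_⟩
  by_contra hcon
  push_neg at hcon
  have ha : ∀ i, coeff (Finsupp.single i 1) f ∈ maximalIdeal Λ := fun i =>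
    (mem_maximalIdeal _).2 (mem_nonunits_iff.2 (hcon i))
  set c := constantCoeff f with hc
  have hCX : ∀ (a : Λ) (i : Fin m), C a * X i = monomial (Finsupp.single i 1) a := by
    intro a i
    have := monomial_mul_monomial (0 : Fin m →₀ ℕ) (Finsupp.single i 1) a (1 : Λ)
    rw [zero_add, mul_one] at this
    exact this
  set rem := f - C c
    - ∑ i, C (coeff (Finsupp.single i 1) f) * X i with hrem
  have hremmem : rem ∈ (Ideal.span (Set.range (X : Fin m → MvPowerSeries (Fin m) Λ))) ^ 2 := by
    refine mem_pow_span_X 2 _ (fun d hd => ?_)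
    rw [hrem, map_sub, map_sub, map_sum]
    have hsum : ∀ (dd : Fin m →₀ ℕ), (∑ i, coeff dd (C (coeff (Finsupp.single i 1) f) * X i))
        = ∑ i, (if dd = Finsupp.single i 1 then coeff (Finsupp.single i 1) f else 0) := by
      intro dd
      refine Finset.sum_congr rfl (fun i _ => ?_)
      rw [hCX, coeff_monomial]
    rw [hsum]
    interval_cases hdd : degf d
    · have hd0 : d = 0 := (degf_eq_zero_iff d).1 hdd
      subst hd0
      rw [coeff_zero_eq_constantCoeff_apply, ← hc, coeff_C, if_pos rfl]
      rw [Finset.sum_eq_zero (fun i _ => ?_)]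
      · ring
      · rw [if_neg]
        intro hcontra
        have := Finsupp.single_eq_zero.1 hcontra.symm
        omega
    · obtain ⟨i₁, hi₁⟩ := eq_single_of_degf_eq_one hdd
      subst hi₁
      rw [coeff_C, if_neg (fun hcontra => by
          have := Finsupp.single_eq_zero.1 hcontra; omega),
        Finset.sum_eq_single i₁ (fun i _ hne => ?_) (fun habs => absurd (Finset.mem_univ _) habs),
        if_pos rfl]
      · ring
      · rw [if_neg]
        intro hcontra
        exact hne ((Finsupp.single_left_inj (one_ne_zero)).1 hcontra.symm)
  have hXK : (PowerSeries.X : PowerSeries A) ∈ Kideal A := by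
    have hXeq : (PowerSeries.X : PowerSeries A) = ψ.symm f := by
      rw [hf, ψ.symm_apply_apply]
    have hfdec : f = (C c
        + ∑ i, C (coeff (Finsupp.single i 1) f) * X i) + rem := by
      rw [hrem]; ring
    rw [hXeq, hfdec, map_add, map_add]
    refine add_mem (add_mem ?_ ?_) ?_
    · have h1 : (C) c = algebraMap Λ (MvPowerSeries (Fin m) Λ) c := by
        rw [MvPowerSeries.algebraMap_apply]
        simp
      rw [h1, AlgEquiv.commutes, PowerSeries.algebraMap_apply]
      exact algebraMap_mem_Kideal hc0
    · rw [map_sum]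
      refine sum_mem (fun i _ => ?_)
      rw [map_mul]
      have h1 : (C) (coeff (Finsupp.single i 1) f)
          = algebraMap Λ (MvPowerSeries (Fin m) Λ) (coeff (Finsupp.single i 1) f) := by
        rw [MvPowerSeries.algebraMap_apply]
        simp
      rw [h1, AlgEquiv.commutes, PowerSeries.algebraMap_apply]
      exact Ideal.mul_mem_right _ _ (algebraMap_mem_Kideal (ha i))
    · have hmap : ψ.symm rem ∈ Ideal.map (ψ.symm : MvPowerSeries (Fin m) Λ →+* PowerSeries A)
          ((Ideal.span (Set.range (X : Fin m → MvPowerSeries (Fin m) Λ))) ^ 2) :=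
        Ideal.mem_map_of_mem _ hremmem
      rw [Ideal.map_pow] at hmap
      have hle : Ideal.map (ψ.symm : MvPowerSeries (Fin m) Λ →+* PowerSeries A)
          (Ideal.span (Set.range (X : Fin m → MvPowerSeries (Fin m) Λ)))
          ≤ maximalIdeal (PowerSeries A) := by
        rw [Ideal.map_span, Ideal.span_le]
        rintro _ ⟨_, ⟨i, rfl⟩, rfl⟩
        rw [SetLike.mem_coe, mem_maximalIdeal, mem_nonunits_iff]
        intro hunit
        have hXi : ¬ IsUnit (X i : MvPowerSeries (Fin m) Λ) := by
          intro hXi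
          have := isUnit_iff_constantCoeff.1 hXi
          rw [constantCoeff_X] at this
          exact not_isUnit_zero this
        refine hXi ?_
        have := hunit.map (ψ : PowerSeries A →+* MvPowerSeries (Fin m) Λ)
        rwa [show (ψ : PowerSeries A →+* MvPowerSeries (Fin m) Λ) ((ψ.symm : MvPowerSeries (Fin m) Λ →+* PowerSeries A) (X i)) = X i from ψ.apply_symm_apply _] at this
      have := Ideal.pow_right_mono hle 2 hmap
      exact maximalIdeal_sq_le_Kideal this
  have h1 : PowerSeries.coeff 1 (PowerSeries.X : PowerSeries A) ∈ maximalIdeal A :=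
    ((mem_Kideal_iff).1 hXK).2
  rw [PowerSeries.coeff_one_X] at h1
  exact (mem_nonunits_iff.1 ((mem_maximalIdeal _).1 h1)) isUnit_one

end Extract


section Main

variable [IsLocalRing Λ] [IsAdicComplete (maximalIdeal Λ) Λ]
variable {A : Type} [CommRing A] [IsLocalRing A] [Algebra Λ A] [IsLocalHom (algebraMap Λ A)]

omit [IsLocalRing Λ] [IsAdicComplete (maximalIdeal Λ) Λ] in
lemma splitAlgEquiv_apply {σ τ : Type} (e : (σ →₀ ℕ) ≃+ ((Unit →₀ ℕ) × (τ →₀ ℕ)))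
    (g : MvPowerSeries σ Λ) : splitAlgEquiv e g = toSplitFun e g := rfl

theorem main {n : ℕ} (ψ : PowerSeries A ≃ₐ[Λ] MvPowerSeries (Fin (n + 1)) Λ) :
    Nonempty (A ≃ₐ[Λ] MvPowerSeries (Fin n) Λ) := by
  classical
  obtain ⟨hc0, i₀, hi₀⟩ := exists_unit_linear ψ
  set f := ψ PowerSeries.X with hfdef
  set eFin : Fin (n + 1) ≃ (Unit ⊕ Fin n) :=
    (finSuccEquiv' i₀).trans ((Equiv.optionEquivSumPUnit (Fin n)).trans
      (Equiv.sumComm (Fin n) Unit)) with heFin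
  have heFin_i₀ : eFin i₀ = Sum.inl () := by
    rw [heFin]
    simp [finSuccEquiv'_at]
  set e : (Fin (n + 1) →₀ ℕ) ≃+ ((Unit →₀ ℕ) × (Fin n →₀ ℕ)) :=
    (Finsupp.domCongr eFin).trans Finsupp.sumFinsuppAddEquivProdFinsupp with he
  have hE : e (Finsupp.single i₀ 1) = (Finsupp.single () 1, (0 : Fin n →₀ ℕ)) := by
    rw [he]
    have h1 : (Finsupp.domCongr (M := ℕ) eFin) (Finsupp.single i₀ 1)
        = Finsupp.single (eFin i₀) 1 := Finsupp.equivMapDomain_single _ _ _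
    rw [AddEquiv.trans_apply, h1, heFin_i₀]
    refine Prod.ext (Finsupp.ext fun x => ?_) (Finsupp.ext fun y => ?_)
    · rw [Finsupp.fst_sumFinsuppAddEquivProdFinsupp]
      cases x
      simp
    · rw [Finsupp.snd_sumFinsuppAddEquivProdFinsupp]
      simp [Finsupp.single_apply]
  set F : PowerSeries (MvPowerSeries (Fin n) Λ) := splitAlgEquiv e f with hFdef
  have hcoeffF : ∀ (k : ℕ) (t : Fin n →₀ ℕ),
      coeff t (PowerSeries.coeff k F)
        = coeff (e.symm (Finsupp.single () k, t)) f := by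
    intro k t
    rw [PowerSeries.coeff_def (s := Finsupp.single () k) (by simp), hFdef, splitAlgEquiv_apply]
    exact coeff_toSplitFun e f _ t
  have h0 : PowerSeries.coeff 0 F
      ∈ maximalIdeal (MvPowerSeries (Fin n) Λ) := by
    rw [mem_maximalIdeal, mem_nonunits_iff]
    intro hunit
    rw [isUnit_iff_constantCoeff] at hunit
    rw [← coeff_zero_eq_constantCoeff_apply, hcoeffF 0 0] at hunit
    have hzero : ((Finsupp.single () (0:ℕ)), (0 : Fin n →₀ ℕ))
        = (0 : (Unit →₀ ℕ) × (Fin n →₀ ℕ)) := by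
      rw [Finsupp.single_zero]; rfl
    rw [hzero, map_zero, coeff_zero_eq_constantCoeff_apply] at hunit
    exact (mem_nonunits_iff.1 ((mem_maximalIdeal _).1 hc0)) hunit
  have h1 : IsUnit (PowerSeries.coeff 1 F) := by
    rw [isUnit_iff_constantCoeff, ← coeff_zero_eq_constantCoeff_apply, hcoeffF 1 0]
    have hsymm : e.symm (Finsupp.single () 1, (0 : Fin n →₀ ℕ)) = Finsupp.single i₀ 1 := by
      rw [← hE, AddEquiv.symm_apply_apply]
    rw [hsymm]
    exact hi₀
  -- step 1 : A ≃ T ⧸ (X)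
  let φC : PowerSeries A →ₐ[Λ] A :=
    { toRingHom := PowerSeries.constantCoeff
      commutes' := fun r => by
        show PowerSeries.constantCoeff (algebraMap Λ (PowerSeries A) r) = algebraMap Λ A r
        rw [PowerSeries.algebraMap_apply, PowerSeries.constantCoeff_C] }
  have hφCsurj : Function.Surjective φC := fun a =>
    ⟨PowerSeries.C a, PowerSeries.constantCoeff_C a⟩
  have hker : RingHom.ker φC = Ideal.span {(PowerSeries.X : PowerSeries A)} := by
    ext g
    rw [RingHom.mem_ker, Ideal.mem_span_singleton, PowerSeries.X_dvd_iff]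
    rfl
  let E1 : (PowerSeries A ⧸ Ideal.span {(PowerSeries.X : PowerSeries A)}) ≃ₐ[Λ] A :=
    (Ideal.quotientEquivAlgOfEq Λ hker.symm).trans
      (Ideal.quotientKerAlgEquivOfSurjective hφCsurj)
  -- step 2
  let E2 : (PowerSeries A ⧸ Ideal.span {(PowerSeries.X : PowerSeries A)}) ≃ₐ[Λ]
      (MvPowerSeries (Fin (n + 1)) Λ ⧸ Ideal.span {f}) :=
    Ideal.quotientEquivAlg (Ideal.span {(PowerSeries.X : PowerSeries A)}) (Ideal.span {f}) ψ
      (by rw [Ideal.map_span, Set.image_singleton]; rfl)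
  -- step 3
  let E3 : (MvPowerSeries (Fin (n + 1)) Λ ⧸ Ideal.span {f}) ≃ₐ[Λ]
      (PowerSeries (MvPowerSeries (Fin n) Λ) ⧸ Ideal.span {F}) :=
    Ideal.quotientEquivAlg (Ideal.span {f}) (Ideal.span {F}) (splitAlgEquiv e)
      (by rw [Ideal.map_span, Set.image_singleton, hFdef]; rfl)
  -- step 4
  let χ : MvPowerSeries (Fin n) Λ →ₐ[Λ]
      (PowerSeries (MvPowerSeries (Fin n) Λ) ⧸ Ideal.span {F}) :=
    (Ideal.Quotient.mkₐ Λ (Ideal.span {F})).comp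
      { toRingHom := PowerSeries.C
        commutes' := fun r => (PowerSeries.algebraMap_apply).symm }
  have hbij : Function.Bijective χ := weierstrass_bijective F h0 h1
  let E4 : MvPowerSeries (Fin n) Λ ≃ₐ[Λ]
      (PowerSeries (MvPowerSeries (Fin n) Λ) ⧸ Ideal.span {F}) :=
    AlgEquiv.ofBijective χ hbij
  exact ⟨E1.symm.trans (E2.trans (E3.trans E4.symm))⟩

end Main

end Stmt4Aux

/-- Let `Λ` be a complete Noetherian local ring and `A` a complete
Noetherian local `Λ`-algebra with the same residue field.  Since
`A ⊗̂_Λ Λ[[x]] ≅ A[[x]]`, the statement says: if `A[[x]]` is isomorphic as a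
`Λ`-algebra to `Λ[[x_1,…,x_m]]`, then `A ≅ Λ[[x_1,…,x_{m−1}]]`. -/
theorem stmt4 (Λ A : Type) [CommRing Λ] [IsLocalRing Λ] [IsNoetherianRing Λ]
    [IsAdicComplete (maximalIdeal Λ) Λ]
    [CommRing A] [IsLocalRing A] [IsNoetherianRing A] [IsAdicComplete (maximalIdeal A) A]
    [Algebra Λ A] [IsLocalHom (algebraMap Λ A)]
    (m : ℕ)
    (h : Nonempty (PowerSeries A ≃ₐ[Λ] MvPowerSeries (Fin m) Λ)) :
    Nonempty (A ≃ₐ[Λ] MvPowerSeries (Fin (m - 1)) Λ) := by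
  obtain ⟨ψ⟩ := h
  have hm : m ≠ 0 := by
    obtain ⟨-, i₀, -⟩ := Stmt4Aux.exists_unit_linear ψ
    rintro rfl
    exact i₀.elim0
  obtain ⟨n, rfl⟩ : ∃ n, m = n + 1 := ⟨m - 1, by omega⟩
  exact Stmt4Aux.main ψ
end

section
/- Let A be an integral domain which is a complete Noetherian local ring with finite residue field k of characteristic ℓ, with residue map π : A → k. Let q be a prime power coprime to ℓ, and let X ∈ GL_n(A) be a matrix such that (i) there exists φ ∈ GL_n(A) with φXφ^{−1} = X^q, and (ii) the reduction of X modulo the maximal ideal is unipotent (all eigenvalues equal to 1 in k̄). If ℓ ≥ q^{n!}, then the characteristic polynomial of X is (T − 1)^n. -/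
open IsLocalRing

section Aux

open Polynomial Matrix

variable {n : Type*} [Fintype n] [DecidableEq n] {R : Type*} [CommRing R]

/-- Evaluation of the characteristic polynomial. -/
lemma my_eval_charpoly (M : Matrix n n R) (t : R) :
    M.charpoly.eval t = (t • (1 : Matrix n n R) - M).det := by
  rw [Matrix.charpoly, ← Polynomial.coe_evalRingHom, RingHom.map_det]
  congr 1
  ext i j
  by_cases h : i = j <;>
    simp [h, Matrix.charmatrix_apply, Matrix.map_apply, Matrix.diagonal_apply, Matrix.one_apply,
      Matrix.sub_apply, Matrix.smul_apply]

/-- Characteristic polynomial is invariant under conjugation by a unit. -/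
lemma my_charpoly_units_conj (U : (Matrix n n R)ˣ) (M : Matrix n n R) :
    ((U : Matrix n n R) * M * (↑U⁻¹ : Matrix n n R)).charpoly = M.charpoly := by
  let f : Matrix n n R →* Matrix n n R[X] :=
    ((C : R →+* R[X]).mapMatrix : Matrix n n R →+* Matrix n n R[X]).toMonoidHom
  let V : (Matrix n n R[X])ˣ := Units.map f U
  have hV : (V : Matrix n n R[X]) = (C : R →+* R[X]).mapMatrix (U : Matrix n n R) := rfl
  have hVinv : ((V⁻¹ : (Matrix n n R[X])ˣ) : Matrix n n R[X])
      = (C : R →+* R[X]).mapMatrix (↑U⁻¹ : Matrix n n R) :=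
    Units.coe_map_inv f U
  have h1 : (C : R →+* R[X]).mapMatrix (U : Matrix n n R) *
      (C : R →+* R[X]).mapMatrix (↑U⁻¹ : Matrix n n R) = 1 := by
    rw [← RingHom.map_mul, Units.mul_inv, RingHom.map_one]
  have h2 : (C : R →+* R[X]).mapMatrix ((U : Matrix n n R) * M * (↑U⁻¹ : Matrix n n R))
      = (C : R →+* R[X]).mapMatrix (U : Matrix n n R) * (C : R →+* R[X]).mapMatrix M *
        (C : R →+* R[X]).mapMatrix (↑U⁻¹ : Matrix n n R) := by
    rw [RingHom.map_mul, RingHom.map_mul]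
  have hscal : Matrix.scalar n (X : R[X]) = (X : R[X]) • (1 : Matrix n n R[X]) := by
    ext i j; by_cases h : i = j <;>
      simp [h, Matrix.scalar_apply, Matrix.diagonal_apply, Matrix.one_apply]
  have key : charmatrix ((U : Matrix n n R) * M * (↑U⁻¹ : Matrix n n R))
      = (V : Matrix n n R[X]) * charmatrix M * ((V⁻¹ : (Matrix n n R[X])ˣ) : Matrix n n R[X]) := by
    rw [charmatrix, charmatrix, hV, hVinv, h2, hscal]
    have expand : (C : R →+* R[X]).mapMatrix (U : Matrix n n R) *
        ((X : R[X]) • (1 : Matrix n n R[X]) - (C : R →+* R[X]).mapMatrix M) *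
        (C : R →+* R[X]).mapMatrix (↑U⁻¹ : Matrix n n R)
        = (X : R[X]) • ((C : R →+* R[X]).mapMatrix (U : Matrix n n R) * 1 *
            (C : R →+* R[X]).mapMatrix (↑U⁻¹ : Matrix n n R)) -
          (C : R →+* R[X]).mapMatrix (U : Matrix n n R) * (C : R →+* R[X]).mapMatrix M *
            (C : R →+* R[X]).mapMatrix (↑U⁻¹ : Matrix n n R) := by
      rw [mul_sub, sub_mul, mul_smul_comm, smul_mul_assoc]
    rw [expand, mul_one, h1]
  rw [Matrix.charpoly, key, Matrix.det_units_conj, Matrix.charpoly]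

end Aux

/-- Let `A` be an integral domain which is a complete Noetherian local ring
with finite residue field `k` of characteristic `ℓ`.  Let `q` be a prime power coprime
to `ℓ`, and `X ∈ GL_n(A)` such that (i) there is `φ ∈ GL_n(A)` with `φXφ⁻¹ = X^q`, and
(ii) the reduction of `X` mod the maximal ideal is unipotent (its characteristic
polynomial over `k` is `(T−1)^n`).  If `ℓ ≥ q^{n!}`, then `charpoly X = (T−1)^n`. -/
theorem stmt8 (A : Type) [CommRing A] [IsDomain A] [IsLocalRing A] [IsNoetherianRing A]
    [IsAdicComplete (maximalIdeal A) A] [Finite (ResidueField A)]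
    (ℓ : ℕ) (hℓ : ℓ.Prime) [CharP (ResidueField A) ℓ]
    (q n : ℕ) (hq : IsPrimePow q) (hcop : ¬ ℓ ∣ q)
    (X φ : (Matrix (Fin n) (Fin n) A)ˣ)
    (hconj : φ * X * φ⁻¹ = X ^ q)
    (hunip : Matrix.charpoly ((X : Matrix (Fin n) (Fin n) A).map (residue A)) =
      (Polynomial.X - 1) ^ n)
    (hbig : q ^ Nat.factorial n ≤ ℓ) :
    Matrix.charpoly (X : Matrix (Fin n) (Fin n) A) = (Polynomial.X - 1) ^ n := by
  classical
  open Polynomial in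
  -- basic numerology
  have hq2 : 2 ≤ q := hq.two_le
  have hfac : 0 < Nat.factorial n := Nat.factorial_pos n
  have hqfac2 : 2 ≤ q ^ Nat.factorial n := by
    calc 2 = 2 ^ 1 := by norm_num
    _ ≤ q ^ Nat.factorial n := Nat.pow_le_pow_left hq2 1 |>.trans
        (Nat.pow_le_pow_right (by omega) hfac) |>.trans_eq rfl
  set N : ℕ := q ^ n * (q ^ Nat.factorial n - 1) with hNdef
  have hNpos : 0 < N := by
    have : 0 < q ^ n := Nat.pow_pos (n := n) (by omega)
    have : 0 < q ^ Nat.factorial n - 1 := by omega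
    positivity
  have hℓN : ¬ ℓ ∣ N := by
    intro hdvd
    rcases (Nat.Prime.dvd_mul hℓ).1 hdvd with h | h
    · exact hcop (hℓ.dvd_of_dvd_pow h)
    · have h1 : q ^ Nat.factorial n - 1 < ℓ := by omega
      have h2 : 0 < q ^ Nat.factorial n - 1 := by omega
      exact absurd (Nat.le_of_dvd h2 h) (by omega)
  -- Setup: fraction field and algebraic closure
  set p : Polynomial A := Matrix.charpoly (X : Matrix (Fin n) (Fin n) A) with hpdef
  have hpmonic : p.Monic := Matrix.charpoly_monic _
  obtain ⟨K, _, _, jA, hinj⟩ :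
      ∃ (K : Type) (_ : Field K) (_ : IsAlgClosed K) (jA : A →+* K), Function.Injective jA := by
    refine ⟨AlgebraicClosure (FractionRing A), inferInstance, inferInstance,
      (algebraMap (FractionRing A) (AlgebraicClosure (FractionRing A))).comp
        (algebraMap A (FractionRing A)), ?_⟩
    exact (algebraMap (FractionRing A) (AlgebraicClosure (FractionRing A))).injective.comp
      (IsFractionRing.injective A (FractionRing A))
  set M : Matrix (Fin n) (Fin n) K := (X : Matrix (Fin n) (Fin n) A).map jA with hMdef
  set pK : Polynomial K := p.map jA with hpKdef
  have hpKmonic : pK.Monic := hpmonic.map _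
  have hpKne : pK ≠ 0 := hpKmonic.ne_zero
  have hMp : M.charpoly = pK := Matrix.charpoly_map _ _
  have hpdeg : p.natDegree = n := by
    rw [hpdef, Matrix.charpoly_natDegree_eq_dim, Fintype.card_fin]
  have hpKdeg : pK.natDegree = n := by
    rw [hpKdef, hpmonic.natDegree_map, hpdeg]
  -- charpoly of X^q equals charpoly of X
  have hXq : (X : Matrix (Fin n) (Fin n) A) ^ q
      = (φ : Matrix (Fin n) (Fin n) A) * (X : Matrix (Fin n) (Fin n) A) *
        ((φ⁻¹ : (Matrix (Fin n) (Fin n) A)ˣ) : Matrix (Fin n) (Fin n) A) := by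
    rw [← Units.val_pow_eq_pow_val, ← hconj, Units.val_mul, Units.val_mul]
  have hcp : Matrix.charpoly ((X : Matrix (Fin n) (Fin n) A) ^ q) = p := by
    rw [hXq, my_charpoly_units_conj]
  -- roots of pK are closed under q-th powers
  have hstep : ∀ t : K, pK.IsRoot t → pK.IsRoot (t ^ q) := by
    intro t ht
    have hdet : (t • (1 : Matrix (Fin n) (Fin n) K) - M).det = 0 := by
      rw [← my_eval_charpoly, hMp]; exact ht
    obtain ⟨v, hv0, hv⟩ := (Matrix.exists_mulVec_eq_zero_iff).2 hdet
    have hMv : M.mulVec v = t • v := by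
      rw [Matrix.sub_mulVec, Matrix.smul_mulVec, Matrix.one_mulVec, sub_eq_zero] at hv
      exact hv.symm
    have hpow : ∀ m : ℕ, (M ^ m).mulVec v = t ^ m • v := by
      intro m; induction m with
      | zero => simp
      | succ s ih =>
        rw [pow_succ, ← Matrix.mulVec_mulVec, hMv, Matrix.mulVec_smul, ih, smul_smul, pow_succ,
          mul_comm]
    have hdet2 : ((t ^ q) • (1 : Matrix (Fin n) (Fin n) K) - M ^ q).det = 0 := by
      rw [← Matrix.exists_mulVec_eq_zero_iff]
      exact ⟨v, hv0, by
        rw [Matrix.sub_mulVec, Matrix.smul_mulVec, Matrix.one_mulVec, hpow q, sub_self]⟩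
    have hMq : M ^ q = ((X : Matrix (Fin n) (Fin n) A) ^ q).map jA := by
      rw [hMdef, ← RingHom.mapMatrix_apply, ← RingHom.mapMatrix_apply, map_pow]
    have hcq : (M ^ q).charpoly = pK := by
      rw [hMq, Matrix.charpoly_map, hcp]
    have := my_eval_charpoly (M ^ q) (t ^ q)
    rw [hcq] at this
    rwa [Polynomial.IsRoot, this]
  have hroots_pow : ∀ (i : ℕ) (t : K), pK.IsRoot t → pK.IsRoot (t ^ q ^ i) := by
    intro i
    induction i with
    | zero => intro t ht; simpa using ht
    | succ s ih =>
      intro t ht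
      have := hstep _ (ih t ht)
      rwa [← pow_mul, ← pow_succ] at this
  -- roots are nonzero
  have hdetX : IsUnit (X : Matrix (Fin n) (Fin n) A).det :=
    (Matrix.isUnit_iff_isUnit_det _).1 X.isUnit
  have hcoeff0 : p.coeff 0 ≠ 0 := by
    intro h0
    have := Matrix.det_eq_sign_charpoly_coeff (X : Matrix (Fin n) (Fin n) A)
    rw [← hpdef, h0, mul_zero] at this
    rw [this] at hdetX
    exact (not_isUnit_zero hdetX)
  have hroot_ne : ∀ t : K, pK.IsRoot t → t ≠ 0 := by
    intro t ht h0
    subst h0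
    rw [Polynomial.IsRoot, Polynomial.eval_zero_map] at ht
    apply hcoeff0
    apply hinj
    rw [map_zero, Polynomial.coeff_zero_eq_eval_zero]
    exact ht
  -- every root satisfies t ^ N = 1
  have hcard : pK.roots.toFinset.card ≤ n := by
    calc pK.roots.toFinset.card ≤ Multiset.card pK.roots := Multiset.toFinset_card_le _
    _ ≤ pK.natDegree := Polynomial.card_roots' pK
    _ = n := hpKdeg
  have hrootN : ∀ t : K, pK.IsRoot t → t ^ N = 1 := by
    intro t ht
    have htne : t ≠ 0 := hroot_ne t ht
    have hmem : ∀ i : ℕ, t ^ q ^ i ∈ pK.roots.toFinset := by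
      intro i
      rw [Multiset.mem_toFinset, Polynomial.mem_roots hpKne]
      exact hroots_pow i t ht
    obtain ⟨i, j, hij, heq⟩ := Fintype.exists_ne_map_eq_of_card_lt
      (fun i : Fin (n + 1) => (⟨t ^ q ^ (i : ℕ), hmem (i : ℕ)⟩ : pK.roots.toFinset))
      (by rw [Fintype.card_coe, Fintype.card_fin]; omega)
    have heq' : t ^ q ^ (i : ℕ) = t ^ q ^ (j : ℕ) := congrArg Subtype.val heq
    have key : ∀ a b : ℕ, a < b → b ≤ n → t ^ q ^ a = t ^ q ^ b → t ^ N = 1 := by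
      intro a b hab hbn habeq
      set m := b - a with hmdef
      have hm1 : 1 ≤ m := by omega
      have hmn : m ≤ n := by omega
      have hune : t ^ q ^ a ≠ 0 := pow_ne_zero _ htne
      have hu : (t ^ q ^ a) ^ q ^ m = t ^ q ^ a := by
        rw [← pow_mul, ← pow_add, show a + m = b by omega]
        exact habeq.symm
      have hqm1 : 1 ≤ q ^ m := Nat.one_le_pow _ _ (by omega)
      have hu1 : (t ^ q ^ a) ^ (q ^ m - 1) = 1 := by
        have h2 : (t ^ q ^ a) ^ (q ^ m - 1) * t ^ q ^ a = 1 * t ^ q ^ a := by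
          rw [one_mul, ← pow_succ]
          rw [show q ^ m - 1 + 1 = q ^ m by omega, hu]
        exact mul_right_cancel₀ hune h2
      have hdvd1 : q ^ a ∣ q ^ n := pow_dvd_pow q (by omega)
      have hdvd2 : q ^ m - 1 ∣ q ^ Nat.factorial n - 1 := by
        have hmfac : m ∣ Nat.factorial n := Nat.dvd_factorial (by omega) hmn
        obtain ⟨c, hc⟩ := hmfac
        calc q ^ m - 1 ∣ (q ^ m) ^ c - 1 ^ c := Nat.sub_dvd_pow_sub_pow _ 1 c
        _ = q ^ Nat.factorial n - 1 := by rw [one_pow, ← pow_mul, ← hc]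
      obtain ⟨e, he⟩ : q ^ a * (q ^ m - 1) ∣ N := mul_dvd_mul hdvd1 hdvd2
      rw [he, pow_mul, pow_mul, hu1, one_pow]
    rcases lt_trichotomy (i : ℕ) (j : ℕ) with h | h | h
    · exact key _ _ h (by omega) heq'
    · exact absurd (Fin.ext h) hij
    · exact key _ _ h (by omega) heq'.symm
  -- pK divides (X^N - 1)^n over K
  have hg1monic : (Polynomial.X ^ N - 1 : Polynomial K).Monic := by
    have := Polynomial.monic_X_pow_sub_C (1 : K) (by omega : N ≠ 0)
    simpa using this
  have hg1ne : (Polynomial.X ^ N - 1 : Polynomial K) ≠ 0 := hg1monic.ne_zero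
  have hle : pK.roots ≤ n • (Polynomial.X ^ N - 1 : Polynomial K).roots := by
    rw [Multiset.le_iff_count]
    intro a
    rw [Multiset.count_nsmul]
    by_cases ha : a ∈ pK.roots
    · have haroot : a ∈ (Polynomial.X ^ N - 1 : Polynomial K).roots := by
        rw [Polynomial.mem_roots hg1ne, Polynomial.IsRoot, Polynomial.eval_sub,
          Polynomial.eval_pow, Polynomial.eval_X, Polynomial.eval_one,
          hrootN a ((Polynomial.mem_roots hpKne).1 ha), sub_self]
      have h1 : Multiset.count a pK.roots ≤ n := by
        calc Multiset.count a pK.roots ≤ Multiset.card pK.roots := Multiset.count_le_card _ _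
        _ ≤ pK.natDegree := Polynomial.card_roots' pK
        _ = n := hpKdeg
      have h2 : 1 ≤ Multiset.count a (Polynomial.X ^ N - 1 : Polynomial K).roots :=
        Multiset.one_le_count_iff_mem.2 haroot
      calc Multiset.count a pK.roots ≤ n := h1
      _ = n * 1 := (mul_one n).symm
      _ ≤ n * Multiset.count a (Polynomial.X ^ N - 1 : Polynomial K).roots :=
        Nat.mul_le_mul_left n h2
    · rw [Multiset.count_eq_zero_of_notMem ha]
      exact Nat.zero_le _
  have hprodp : pK = (pK.roots.map (fun a => Polynomial.X - Polynomial.C a)).prod :=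
    (IsAlgClosed.splits pK).eq_prod_roots_of_monic hpKmonic
  have hprodg : (Polynomial.X ^ N - 1 : Polynomial K)
      = ((Polynomial.X ^ N - 1 : Polynomial K).roots.map
          (fun a => Polynomial.X - Polynomial.C a)).prod :=
    (IsAlgClosed.splits _).eq_prod_roots_of_monic hg1monic
  have hdvdK : pK ∣ (Polynomial.X ^ N - 1 : Polynomial K) ^ n := by
    have step1 : pK ∣ ((n • (Polynomial.X ^ N - 1 : Polynomial K).roots).map
        (fun a => Polynomial.X - Polynomial.C a)).prod := by
      rw [hprodp]
      exact Multiset.prod_dvd_prod_of_le (Multiset.map_le_map hle)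
    have step2 : ((n • (Polynomial.X ^ N - 1 : Polynomial K).roots).map
        (fun a => Polynomial.X - Polynomial.C a)).prod
        = (Polynomial.X ^ N - 1 : Polynomial K) ^ n := by
      rw [Multiset.map_nsmul, Multiset.prod_nsmul, ← hprodg]
    rwa [step2] at step1
  -- descend the divisibility to A
  have hmapg : ((Polynomial.X ^ N - 1 : Polynomial A) ^ n).map jA
      = (Polynomial.X ^ N - 1 : Polynomial K) ^ n := by
    simp [Polynomial.map_pow]
  have hdvdA : p ∣ (Polynomial.X ^ N - 1 : Polynomial A) ^ n := by
    rw [← Polynomial.modByMonic_eq_zero_iff_dvd hpmonic]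
    have h0 : (((Polynomial.X ^ N - 1 : Polynomial A) ^ n) %ₘ p).map jA = 0 := by
      rw [Polynomial.map_modByMonic _ hpmonic]
      rw [show p.map jA = pK from rfl, hmapg]
      rw [Polynomial.modByMonic_eq_zero_iff_dvd hpKmonic]
      exact hdvdK
    exact Polynomial.map_injective jA hinj (by rw [h0, Polynomial.map_zero])
  obtain ⟨h, hgh⟩ := hdvdA
  -- residue field computations
  have hpres : p.map (residue A) = (Polynomial.X - 1) ^ n := by
    rw [hpdef, ← Matrix.charpoly_map]; exact hunip
  have hX1ne : (Polynomial.X - 1 : Polynomial (ResidueField A)) ≠ 0 := by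
    have := Polynomial.X_sub_C_ne_zero (1 : ResidueField A)
    simpa using this
  have hgeom : (Polynomial.X ^ N - 1 : Polynomial (ResidueField A))
      = (∑ i ∈ Finset.range N, (Polynomial.X : Polynomial (ResidueField A)) ^ i) *
        (Polynomial.X - 1) := (geom_sum_mul _ N).symm
  have hhres : h.map (residue A)
      = (∑ i ∈ Finset.range N, (Polynomial.X : Polynomial (ResidueField A)) ^ i) ^ n := by
    have hmap2 : ((Polynomial.X ^ N - 1 : Polynomial A) ^ n).map (residue A)
        = (Polynomial.X ^ N - 1 : Polynomial (ResidueField A)) ^ n := by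
      simp [Polynomial.map_pow]
    have hA : (∑ i ∈ Finset.range N, (Polynomial.X : Polynomial (ResidueField A)) ^ i) ^ n *
        (Polynomial.X - 1 : Polynomial (ResidueField A)) ^ n
        = (Polynomial.X - 1 : Polynomial (ResidueField A)) ^ n * h.map (residue A) := by
      rw [← mul_pow, ← hgeom, ← hmap2, hgh, Polynomial.map_mul, hpres]
    have h2 : (Polynomial.X - 1 : Polynomial (ResidueField A)) ^ n * h.map (residue A)
        = (Polynomial.X - 1 : Polynomial (ResidueField A)) ^ n *
          (∑ i ∈ Finset.range N, (Polynomial.X : Polynomial (ResidueField A)) ^ i) ^ n := by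
      rw [← hA]; ring
    exact mul_left_cancel₀ (pow_ne_zero n hX1ne) h2
  have hNk : ((N : ResidueField A)) ≠ 0 := by
    intro h0
    exact hℓN ((CharP.cast_eq_zero_iff (ResidueField A) ℓ N).1 h0)
  have hhev : h.eval 1 ≠ 0 := by
    intro h0
    have : (h.map (residue A)).eval 1 = 0 := by
      rw [Polynomial.eval_one_map, h0, map_zero]
    rw [hhres, Polynomial.eval_pow, Polynomial.eval_geom_sum] at this
    simp only [one_pow, Finset.sum_const, Finset.card_range, nsmul_eq_mul, smul_eq_mul,
      mul_one] at this
    exact pow_ne_zero n hNk this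
  -- endgame over K
  have hX1Kne : (Polynomial.X - 1 : Polynomial K) ≠ 0 := by
    have := Polynomial.X_sub_C_ne_zero (1 : K)
    simpa using this
  have hprime : Prime (Polynomial.X - 1 : Polynomial K) := by
    have := Polynomial.prime_X_sub_C (1 : K)
    simpa using this
  have hndvd : ¬ (Polynomial.X - 1 : Polynomial K) ∣ h.map jA := by
    intro hdvd
    have hroot : (h.map jA).IsRoot 1 := by
      have : (Polynomial.X - Polynomial.C (1:K)) ∣ h.map jA := by simpa using hdvd
      exact Polynomial.dvd_iff_isRoot.1 this
    rw [Polynomial.IsRoot, Polynomial.eval_one_map] at hroot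
    exact hhev (hinj (by rw [hroot, map_zero]))
  have hdvdprod : (Polynomial.X - 1 : Polynomial K) ^ n ∣ pK * h.map jA := by
    have heq2 : pK * h.map jA = (Polynomial.X ^ N - 1 : Polynomial K) ^ n := by
      rw [show pK = p.map jA from rfl, ← Polynomial.map_mul, ← hgh, hmapg]
    rw [heq2]
    apply pow_dvd_pow_of_dvd
    simpa using sub_dvd_pow_sub_pow (Polynomial.X : Polynomial K) 1 N
  have hpowdvd : (Polynomial.X - 1 : Polynomial K) ^ n ∣ pK :=
    hprime.pow_dvd_of_dvd_mul_right n hndvd hdvdprod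
  obtain ⟨c, hc⟩ := hpowdvd
  have hXnK : ((Polynomial.X - 1 : Polynomial K) ^ n).natDegree = n := by
    rw [Polynomial.natDegree_pow]
    have : (Polynomial.X - 1 : Polynomial K).natDegree = 1 := by
      have := Polynomial.natDegree_X_sub_C (1 : K)
      simpa using this
    rw [this, mul_one]
  have hcne : c ≠ 0 := by
    rintro rfl
    rw [mul_zero] at hc
    exact hpKne hc
  have hcdeg : c.natDegree = 0 := by
    have hmul := Polynomial.natDegree_mul (pow_ne_zero n hX1Kne) hcne
    rw [← hc, hpKdeg, hXnK] at hmul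
    omega
  obtain ⟨a0, rfl⟩ := Polynomial.natDegree_eq_zero.1 hcdeg
  have ha0 : a0 = 1 := by
    have hlead := hpKmonic
    rw [Polynomial.Monic, hc, Polynomial.leadingCoeff_mul, Polynomial.leadingCoeff_pow,
      Polynomial.leadingCoeff_C] at hlead
    have hl1 : (Polynomial.X - 1 : Polynomial K).leadingCoeff = 1 := by
      have := Polynomial.monic_X_sub_C (1 : K)
      simpa [Polynomial.Monic] using this
    rw [hl1, one_pow, one_mul] at hlead
    exact hlead
  have hpKfinal : pK = (Polynomial.X - 1 : Polynomial K) ^ n := by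
    rw [hc, ha0, Polynomial.C_1, mul_one]
  -- descend to A
  apply Polynomial.map_injective jA hinj
  rw [show p.map jA = pK from rfl, hpKfinal]
  simp [Polynomial.map_pow]
end
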